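/- Fix positive integers k, n₁,…,n_k, let P_j ⊆ ℝ^{n_j} be a polytope (the convex hull of a nonempty finite set) for each j ∈ {1,…,k}, and let M : ℝ^{n₁}×⋯×ℝ^{n_k} → ℝ be multilinear. Then conv{(x, M(x)) : x ∈ ∏_{j=1}^k P_j} = conv{(v, M(v)) : v_j is an extreme point of P_j for each j ∈ {1,…,k}}. -/

import Mathlib

/-- `M` is multilinear in the block variables: fixing all blocks except the `j`-th yields an
affine map `ℝ^{n_j} → ℝ`. -/
def IsBlockMultilinear {k : ℕ} {n : Fin k → ℕ}
    (M : ((j : Fin k) → (Fin (n j) → ℝ)) → ℝ) : Prop :=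
  ∀ (j : Fin k) (x : (j : Fin k) → Fin (n j) → ℝ),
    ∃ A : (Fin (n j) → ℝ) →ᵃ[ℝ] ℝ, ∀ y : Fin (n j) → ℝ, M (Function.update x j y) = A y

/-- The affine map `y ↦ (Function.update x m y, A y)`. -/
noncomputable def graphAff {k : ℕ} {n : Fin k → ℕ} (x : (j : Fin k) → Fin (n j) → ℝ)
    (m : Fin k) (A : (Fin (n m) → ℝ) →ᵃ[ℝ] ℝ) :
    (Fin (n m) → ℝ) →ᵃ[ℝ] ((j : Fin k) → Fin (n j) → ℝ) × ℝ where
  toFun y := (Function.update x m y, A y)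
  linear := (LinearMap.single ℝ (fun j => Fin (n j) → ℝ) m).prod A.linear
  map_vadd' p v := by
    refine Prod.ext ?_ ?_
    · funext j
      by_cases h : j = m
      · subst h; simp [Pi.single_eq_same]
      · simp [Function.update_of_ne h, Pi.single_eq_of_ne h]
    · simpa using A.map_vadd p v

/-- The convex hull of the graph of a multilinear function over a product of polytopes is
generated by the graph points over tuples of extreme points (Rikun). -/
theorem multilinear_over_product_of_polytopes_extreme_points
    (k : ℕ) (hk : 0 < k) (n : Fin k → ℕ) (hn : ∀ j, 0 < n j)
    (V : (j : Fin k) → Finset (Fin (n j) → ℝ)) (hV : ∀ j, (V j).Nonempty)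
    (P : (j : Fin k) → Set (Fin (n j) → ℝ))
    (hP : ∀ j, P j = convexHull ℝ ((V j : Set (Fin (n j) → ℝ))))
    (M : ((j : Fin k) → (Fin (n j) → ℝ)) → ℝ) (hM : IsBlockMultilinear M) :
    convexHull ℝ
        ((fun x : (j : Fin k) → Fin (n j) → ℝ => (x, M x)) '' {x | ∀ j, x j ∈ P j}) =
      convexHull ℝ
        ((fun x : (j : Fin k) → Fin (n j) → ℝ => (x, M x)) ''
          {x | ∀ j, x j ∈ Set.extremePoints ℝ (P j)}) := by
  set E : (j : Fin k) → Set (Fin (n j) → ℝ) := fun j => Set.extremePoints ℝ (P j) with hE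
  have hEP : ∀ j, E j ⊆ P j := fun j => extremePoints_subset
  have hEV : ∀ j, E j ⊆ (V j : Set (Fin (n j) → ℝ)) := by
    intro j
    rw [hE]
    simp only [hP j]
    exact extremePoints_convexHull_subset
  have hPE : ∀ j, P j = convexHull ℝ (E j) := by
    intro j
    have hfin : (E j).Finite := (V j).finite_toSet.subset (hEV j)
    have hcl : IsClosed (convexHull ℝ (E j)) := (hfin.isCompact_convexHull ℝ).isClosed
    have hcomp : IsCompact (P j) := by
      rw [hP j]; exact (V j).finite_toSet.isCompact_convexHull ℝ
    have hconv : Convex ℝ (P j) := by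
      rw [hP j]; exact convex_convexHull ℝ _
    have := closure_convexHull_extremePoints hcomp hconv
    rw [← this]
    show closure ((convexHull ℝ) (E j)) = (convexHull ℝ) (E j)
    exact hcl.closure_eq
  have key : ∀ m : ℕ, ∀ x : (j : Fin k) → Fin (n j) → ℝ,
      (∀ j, x j ∈ P j) → (∀ j : Fin k, m ≤ (j : ℕ) → x j ∈ E j) →
      (x, M x) ∈ convexHull ℝ
        ((fun x : (j : Fin k) → Fin (n j) → ℝ => (x, M x)) '' {x | ∀ j, x j ∈ E j}) := by
    intro m
    induction m with
    | zero =>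
      intro x hxP hxE
      exact subset_convexHull ℝ _ ⟨x, fun j => hxE j (Nat.zero_le _), rfl⟩
    | succ m ih =>
      intro x hxP hxE
      by_cases hm : m < k
      · set jm : Fin k := ⟨m, hm⟩ with hjm
        obtain ⟨A, hA⟩ := hM jm x
        set B := graphAff x jm A with hB
        have hBgraph : ∀ y, B y = (Function.update x jm y, M (Function.update x jm y)) := by
          intro y
          rw [hB, hA y]
          rfl
        have hx : x jm ∈ convexHull ℝ (E jm) := (hPE jm) ▸ hxP jm
        have hsub : ⇑B '' (E jm) ⊆ convexHull ℝ
            ((fun x : (j : Fin k) → Fin (n j) → ℝ => (x, M x)) '' {x | ∀ j, x j ∈ E j}) := by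
          rintro _ ⟨v, hv, rfl⟩
          rw [hBgraph]
          apply ih (Function.update x jm v)
          · intro j
            by_cases h : j = jm
            · subst h; simpa using hEP _ hv
            · rw [Function.update_of_ne h]; exact hxP j
          · intro j hj
            by_cases h : j = jm
            · subst h; simpa using hv
            · rw [Function.update_of_ne h]
              apply hxE j
              have hne : (j : ℕ) ≠ m := fun hh => h (Fin.ext hh)
              omega
        have hxeq : (x, M x) = B (x jm) := by
          rw [hBgraph, Function.update_eq_self]
        rw [hxeq]
        have hmem : B (x jm) ∈ ⇑B '' (convexHull ℝ (E jm)) := ⟨x jm, hx, rfl⟩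
        rw [AffineMap.image_convexHull] at hmem
        exact convexHull_min hsub (convex_convexHull ℝ _) hmem
      · exact ih x hxP (fun j hj => absurd (hj.trans_lt j.isLt) hm)
  apply Set.Subset.antisymm
  · apply convexHull_min _ (convex_convexHull ℝ _)
    rintro _ ⟨x, hx, rfl⟩
    exact key k x hx (fun j hj => absurd j.isLt (Nat.not_lt.2 hj))
  · exact convexHull_mono (Set.image_mono (fun x hx j => hEP j (hx j)))
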